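/- Let S be a finite non-abelian simple group and let p be a prime not dividing |S|. Let G = S ≀ ⟨σ⟩ be the wreath product of S with the cyclic group of order p generated by the p-cycle σ = (1,2,…,p), let M = S^p be the base group, and let H = {(s,…,s)σ^i : s ∈ S, 0 ≤ i ≤ p−1} be the diagonal subgroup extended by σ. Then G = M ∪ (∪_{m ∈ M} H^m); in particular γ(G) = 2. -/

import Mathlib

open scoped Pointwise

/-- The normal covering number `γ(G)`: the smallest `k` such that there are `k` proper
subgroups of `G` whose conjugates cover `G`; it is `⊤` (infinity) if no such `k` exists
(e.g. when `G` is cyclic). -/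
noncomputable def normalCoveringNumber (G : Type*) [Group G] : ℕ∞ :=
  sInf {n : ℕ∞ | ∃ k : ℕ, n = (k : ℕ∞) ∧ ∃ H : Fin k → Subgroup G,
    (∀ i, H i ≠ ⊤) ∧ ∀ g : G, ∃ i, ∃ x : G, x * g * x⁻¹ ∈ H i}

/-- The covering number `σ(G)`: the smallest number of proper subgroups of `G` whose
union is `G`; it is `⊤` (infinity) if no such number exists (e.g. when `G` is cyclic). -/
noncomputable def coveringNumber (G : Type*) [Group G] : ℕ∞ :=
  sInf {n : ℕ∞ | ∃ k : ℕ, n = (k : ℕ∞) ∧ ∃ H : Fin k → Subgroup G,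
    (∀ i, H i ≠ ⊤) ∧ ∀ g : G, ∃ i, g ∈ H i}

/-- `μ(G)`: the least integer `k` such that `G` has more than one maximal subgroup
of index `k`. -/
noncomputable def muIndex (G : Type*) [Group G] : ℕ :=
  sInf {k : ℕ | ∃ H K : Subgroup G, IsCoatom H ∧ IsCoatom K ∧ H ≠ K ∧
    H.index = k ∧ K.index = k}

/-- `m(S)`: the smallest index of a proper subgroup of `S`. -/
noncomputable def minIndex (S : Type*) [Group S] : ℕ :=
  sInf {n : ℕ | ∃ H : Subgroup S, H ≠ ⊤ ∧ H.index = n}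

variable (p : ℕ) (S : Type*) [Group S]

/-- The cyclic shift by `i`, as an automorphism of `S^p = (ZMod p → S)`. -/
def shiftAut (i : ZMod p) : MulAut (ZMod p → S) where
  toFun f := fun j => f (j + i)
  invFun f := fun j => f (j - i)
  left_inv f := funext fun j => by simp
  right_inv f := funext fun j => by simp
  map_mul' f g := rfl

/-- The action of the cyclic group of order `p` on `S^p`, permuting the
coordinates cyclically (i.e. the action of `σ = (1,2,…,p)`). -/
def shiftHom : Multiplicative (ZMod p) →* MulAut (ZMod p → S) where
  toFun i := shiftAut p S i.toAdd
  map_one' := by ext f j; simp [shiftAut]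
  map_mul' i j := by ext f k; simp [shiftAut, add_assoc]

/-- The wreath product `G = S ≀ ⟨σ⟩` with `σ = (1,2,…,p)`: the semidirect product of the
base group `M = S^p` by the cyclic group of order `p` permuting coordinates cyclically. -/
abbrev WreathCp := (ZMod p → S) ⋊[shiftHom p S] Multiplicative (ZMod p)

/-- The base group `M = S^p` of the wreath product. -/
def wreathBase : Subgroup (WreathCp p S) := SemidirectProduct.inl.range

/-- The homomorphism `(s, i) ↦ (s,…,s)σⁱ`; its range is the subgroup
`H = {(s,…,s)σⁱ : s ∈ S, 0 ≤ i ≤ p-1}` of diagonal type. -/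
def diagHom : S × Multiplicative (ZMod p) →* WreathCp p S where
  toFun x := ⟨fun _ => x.1, x.2⟩
  map_one' := rfl
  map_mul' a b := by
    ext j <;> first | rfl | simp [shiftHom, shiftAut]

open MulAction in
lemma aux_exists_not_conj_mem {G : Type*} [Group G] [Finite G] (H : Subgroup G) (hH : H ≠ ⊤) :
    ∃ g : G, ∀ x : G, x * g * x⁻¹ ∉ H := by
  by_contra hcon
  push_neg at hcon
  classical
  letI := Fintype.ofFinite G
  letI : ∀ a : G, Fintype (fixedBy (G ⧸ H) a) := fun a => Fintype.ofFinite _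
  letI : Fintype (orbitRel.Quotient G (G ⧸ H)) := Fintype.ofFinite _
  have hsub : Subsingleton (orbitRel.Quotient G (G ⧸ H)) := by
    constructor
    rintro ⟨x⟩ ⟨y⟩
    obtain ⟨g, hg⟩ := MulAction.exists_smul_eq G y x
    exact Quotient.sound ⟨g, hg⟩
  have hcard1 : Fintype.card (orbitRel.Quotient G (G ⧸ H)) = 1 := by
    have hne : Nonempty (orbitRel.Quotient G (G ⧸ H)) := ⟨⟦((1 : G) : G ⧸ H)⟧⟩
    exact Fintype.card_eq_one_iff.mpr ⟨hne.some, fun b => Subsingleton.elim _ _⟩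
  have key := sum_card_fixedBy_eq_card_orbits_mul_card_group G (G ⧸ H)
  rw [hcard1, one_mul] at key
  obtain ⟨g₀, hg₀⟩ : ∃ g₀ : G, g₀ ∉ H := by
    by_contra h
    push_neg at h
    exact hH ((Subgroup.eq_top_iff' H).mpr h)
  have hlt : (∑ _a : G, 1) < ∑ a : G, Fintype.card (fixedBy (G ⧸ H) a) := by
    apply Finset.sum_lt_sum
    · intro i _
      obtain ⟨x, hx⟩ := hcon i
      have hmem : ((x⁻¹ : G) : G ⧸ H) ∈ fixedBy (G ⧸ H) i := by
        rw [mem_fixedBy]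
        show i • (↑(x⁻¹ : G) : G ⧸ H) = ↑(x⁻¹ : G)
        rw [MulAction.Quotient.smul_mk, QuotientGroup.eq]
        simp only [smul_eq_mul]
        have h2 : (i * x⁻¹)⁻¹ * x⁻¹ = (x * i * x⁻¹)⁻¹ := by group
        rw [h2]
        exact H.inv_mem hx
      exact Fintype.card_pos_iff.mpr ⟨⟨_, hmem⟩⟩
    · refine ⟨1, Finset.mem_univ 1, ?_⟩
      have hm1 : ((1 : G) : G ⧸ H) ∈ fixedBy (G ⧸ H) (1 : G) := one_smul _ _
      have hm2 : ((g₀ : G) : G ⧸ H) ∈ fixedBy (G ⧸ H) (1 : G) := one_smul _ _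
      refine Fintype.one_lt_card_iff.mpr ⟨⟨_, hm1⟩, ⟨_, hm2⟩, ?_⟩
      intro h
      apply hg₀
      have : ((1 : G) : G ⧸ H) = (g₀ : G ⧸ H) := congrArg Subtype.val h
      simpa using (QuotientGroup.eq.mp this)
  simp only [Finset.sum_const, smul_eq_mul, mul_one, Finset.card_univ] at hlt
  omega

lemma exists_diag_conj {S : Type*} [Group S] [Finite S] {p : ℕ} (hp : Nat.Prime p)
    (hdvd : ¬ p ∣ Nat.card S) (f : ZMod p → S) (i : ZMod p) (hi : i ≠ 0) :
    ∃ (mf : ZMod p → S) (c : S), ∀ j, (mf j)⁻¹ * c * mf (j + i) = f j := by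
  haveI : Fact p.Prime := ⟨hp⟩
  haveI : NeZero p := ⟨hp.ne_zero⟩
  set Pk : ℕ → S := fun k => ((List.range k).map (fun l => f ((l : ZMod p) * i))).prod with hPk
  have hPsucc : ∀ k, Pk (k + 1) = Pk k * f ((k : ZMod p) * i) := by
    intro k
    simp [hPk, List.range_succ]
  have hcop : (Nat.card S).Coprime p := (hp.coprime_iff_not_dvd.mpr hdvd).symm
  obtain ⟨c, hc⟩ := (powCoprime hcop).surjective (Pk p)
  have hcp : c ^ p = Pk p := hc
  refine ⟨fun j => c ^ (-(((j * i⁻¹).val : ℕ) : ℤ)) * Pk (j * i⁻¹).val, c, ?_⟩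
  intro j
  set k := (j * i⁻¹).val with hk
  have hklt : k < p := ZMod.val_lt _
  have hjk : ((k : ℕ) : ZMod p) = j * i⁻¹ := by
    rw [hk]
    simp [ZMod.natCast_val, ZMod.cast_id]
  have hji : ((k : ℕ) : ZMod p) * i = j := by
    rw [hjk, mul_assoc, inv_mul_cancel₀ hi, mul_one]
  have h2 : (j + i) * i⁻¹ = ((k + 1 : ℕ) : ZMod p) := by
    rw [add_mul, mul_inv_cancel₀ hi, ← hjk]
    push_cast
    ring
  have hk' : ((j + i) * i⁻¹).val = (k + 1) % p := by rw [h2, ZMod.val_natCast]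
  dsimp only
  rw [← hk]
  rcases eq_or_lt_of_le (Nat.succ_le_of_lt hklt) with hcase | hcase
  · rw [Nat.succ_eq_add_one] at hcase
    rw [hk', hcase, Nat.mod_self]
    have hkey : c ^ (k + 1) = Pk k * f j := by
      rw [hcase, hcp, ← hcase, hPsucc, hji]
    simp only [Nat.cast_zero, neg_zero, zpow_zero, one_mul]
    have hPk0 : Pk 0 = 1 := by simp [hPk]
    rw [hPk0, mul_one, mul_inv_rev, zpow_neg, inv_inv, mul_assoc]
    have h3 : c ^ (↑k : ℤ) * c = c ^ (k + 1 : ℕ) := by rw [zpow_natCast, pow_succ]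
    rw [h3, hkey, inv_mul_cancel_left]
  · rw [hk', Nat.mod_eq_of_lt hcase, hPsucc, hji]
    push_cast
    group

lemma diag_conj_eq (mf : ZMod p → S) (c : S) (x : Multiplicative (ZMod p)) :
    (SemidirectProduct.inl mf)⁻¹ * diagHom p S (c, x) * SemidirectProduct.inl mf =
      ⟨fun j => (mf j)⁻¹ * c * mf (j + x.toAdd), x⟩ := by
  rw [show diagHom p S (c, x) = ⟨fun _ => c, x⟩ from rfl]
  ext j
  · rw [SemidirectProduct.mul_left]
    simp only [SemidirectProduct.mul_left, SemidirectProduct.mul_right, SemidirectProduct.inv_left, SemidirectProduct.inv_right, SemidirectProduct.left_inl, SemidirectProduct.right_inl]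
    simp [shiftHom, shiftAut, mul_assoc]
  · simp

lemma finite_wreath [Finite S] (hp : p ≠ 0) : Finite (WreathCp p S) := by
  haveI : NeZero p := ⟨hp⟩
  exact Finite.of_injective (fun g : WreathCp p S => (g.left, g.right))
    (fun a b h => SemidirectProduct.ext (congrArg Prod.fst h) (congrArg Prod.snd h))
/-- Let `S` be a finite non-abelian simple group and `p` a prime not dividing `|S|`.
Then the wreath product `G = S ≀ ⟨σ⟩` (with `σ` a `p`-cycle) is the union of the base
group `M = S^p` and the conjugates `H^m`, `m ∈ M`, of the diagonal-type subgroup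
`H = {(s,…,s)σⁱ}`; in particular `γ(G) = 2`. -/
theorem wreath_product_cover (hS : IsSimpleGroup S) [Finite S]
    (hSnonab : ¬ ∀ a b : S, a * b = b * a)
    (hp : Nat.Prime p) (hdvd : ¬ p ∣ Nat.card S) :
    ((wreathBase p S : Set (WreathCp p S)) ∪
      ⋃ m ∈ (wreathBase p S : Set (WreathCp p S)),
        (fun y => m⁻¹ * y * m) '' (((diagHom p S).range : Subgroup (WreathCp p S)) :
          Set (WreathCp p S)) = Set.univ) ∧
    normalCoveringNumber (WreathCp p S) = 2 := by
  haveI : Fact p.Prime := ⟨hp⟩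
  haveI : Fact (1 < p) := ⟨hp.one_lt⟩
  haveI : NeZero p := ⟨hp.ne_zero⟩
  haveI : Finite (WreathCp p S) := finite_wreath p S hp.ne_zero
  classical
  -- every element with nontrivial right component is an `M`-conjugate of a diagonal element
  have hcover : ∀ g : WreathCp p S, g.right = 1 ∨
      ∃ mf : ZMod p → S, ∃ c : S,
        (SemidirectProduct.inl mf)⁻¹ * diagHom p S (c, g.right) * SemidirectProduct.inl mf
          = g := by
    intro g
    by_cases hg : g.right = 1
    · exact Or.inl hg
    · right
      have hi : Multiplicative.toAdd g.right ≠ 0 := by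
        intro h
        exact hg (by simpa using congrArg Multiplicative.ofAdd h)
      obtain ⟨mf, c, hmc⟩ := exists_diag_conj hp hdvd g.left _ hi
      refine ⟨mf, c, ?_⟩
      rw [diag_conj_eq]
      exact SemidirectProduct.ext (funext fun j => hmc j) rfl
  -- membership of elements with trivial right component in the base
  have hbase_mem : ∀ g : WreathCp p S, g.right = 1 → g ∈ wreathBase p S := by
    intro g hg
    exact ⟨g.left, SemidirectProduct.ext rfl hg.symm⟩
  -- the base subgroup is proper
  have hBase : wreathBase p S ≠ ⊤ := by
    intro h
    have hm : (⟨1, Multiplicative.ofAdd 1⟩ : WreathCp p S) ∈ wreathBase p S := by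
      rw [h]; trivial
    obtain ⟨n, hn⟩ := hm
    have h1 := congrArg SemidirectProduct.right hn
    simp only [SemidirectProduct.right_inl] at h1
    have h0 : (0 : ZMod p) = 1 := congrArg Multiplicative.toAdd h1
    exact zero_ne_one h0
  -- the diagonal subgroup is proper
  push_neg at hSnonab
  obtain ⟨a, b, hab⟩ := hSnonab
  have haneb : a ≠ b := fun h => hab (by rw [h])
  have hDiag : (diagHom p S).range ≠ ⊤ := by
    intro h
    have hm : (⟨fun j => if j = 0 then a else b, 1⟩ : WreathCp p S) ∈ (diagHom p S).range := by
      rw [h]; trivial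
    obtain ⟨⟨s, x⟩, hsx⟩ := hm
    have hleft := congrArg SemidirectProduct.left hsx
    have h0 := congrFun hleft 0
    have h1 := congrFun hleft 1
    simp only [diagHom, MonoidHom.coe_mk, OneHom.coe_mk, if_true, eq_self_iff_true,
      one_ne_zero, if_false] at h0 h1
    exact haneb (h0.symm.trans h1)
  constructor
  · -- the covering statement
    apply Set.eq_univ_iff_forall.mpr
    intro g
    rcases hcover g with hg | ⟨mf, c, hmc⟩
    · exact Or.inl (hbase_mem g hg)
    · refine Or.inr (Set.mem_iUnion₂.mpr ⟨SemidirectProduct.inl mf, ⟨mf, rfl⟩, ?_⟩)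
      exact ⟨diagHom p S (c, g.right), ⟨(c, g.right), rfl⟩, hmc⟩
  · -- the normal covering number
    have h2mem : (2 : ℕ∞) ∈ {n : ℕ∞ | ∃ k : ℕ, n = (k : ℕ∞) ∧
        ∃ H : Fin k → Subgroup (WreathCp p S),
        (∀ i, H i ≠ ⊤) ∧ ∀ g : WreathCp p S, ∃ i, ∃ x : WreathCp p S, x * g * x⁻¹ ∈ H i} := by
      refine ⟨2, by norm_cast, ![wreathBase p S, (diagHom p S).range], ?_, ?_⟩
      · intro i
        fin_cases i
        · exact hBase
        · exact hDiag
      · intro g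
        rcases hcover g with hg | ⟨mf, c, hmc⟩
        · refine ⟨0, 1, ?_⟩
          simpa using hbase_mem g hg
        · refine ⟨1, SemidirectProduct.inl mf, ?_⟩
          simp only [Matrix.cons_val_one, Matrix.head_cons]
          rw [← hmc]
          have hsimp : SemidirectProduct.inl mf *
              ((SemidirectProduct.inl mf)⁻¹ * diagHom p S (c, g.right) *
                SemidirectProduct.inl mf) * (SemidirectProduct.inl mf)⁻¹
              = diagHom p S (c, g.right) := by group
          rw [hsimp]
          exact ⟨(c, g.right), rfl⟩
    refine le_antisymm (sInf_le h2mem) (le_sInf ?_)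
    rintro n ⟨k, rfl, H, hH, hcov⟩
    have hk : 2 ≤ k := by
      by_contra hlt
      push_neg at hlt
      interval_cases k
      · obtain ⟨i, -⟩ := hcov 1
        exact i.elim0
      · obtain ⟨g, hg⟩ := aux_exists_not_conj_mem (H 0) (hH 0)
        obtain ⟨i, x, hx⟩ := hcov g
        exact hg x ((Subsingleton.elim i 0) ▸ hx)
    exact_mod_cast hk
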